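/- arXiv:2105.05550 — 2 statements merged into one kernel-verified Lean document; each statement's English description precedes it below -/
import Mathlib

section
/- Let λ be a partition of n displayed on an e-runner abacus with s beads at positions β_k = λ_k + s − k. Then λ contains an (e,i)-hook if and only if there is an occupied position b and a positive integer k such that position b − ke is unoccupied and exactly k(e−i) of the positions b−ke+1, …, b−1 are occupied. -/
open scoped BigOperators

/-- A partition of `n`, with parts indexed from `1`. -/
structure Ptn (n : ℕ) where
  part : ℕ → ℕ
  antitone : ∀ ⦃a b : ℕ⦄, 1 ≤ a → a ≤ b → part b ≤ part a
  bounded : ∀ a : ℕ, n < a → part a = 0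
  total : ∑ a ∈ Finset.Icc 1 n, part a = n

namespace Ptn

/-- `(a,b)` is a node of the Young diagram of `lam`. -/
def cell {n : ℕ} (lam : Ptn n) (x : ℕ × ℕ) : Prop :=
  1 ≤ x.1 ∧ 1 ≤ x.2 ∧ x.2 ≤ lam.part x.1

/-- leg length of the node `x`. -/
noncomputable def legLen {n : ℕ} (lam : Ptn n) (x : ℕ × ℕ) : ℕ :=
  Set.ncard {a : ℕ | x.1 < a ∧ x.2 ≤ lam.part a}

/-- hook length of the node `x`. -/
noncomputable def hookLen {n : ℕ} (lam : Ptn n) (x : ℕ × ℕ) : ℕ :=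
  (lam.part x.1 - x.2) + legLen lam x + 1

/-- `x` is an `(e,i)`-hook of `lam`. -/
def IsHook (e i : ℕ) {n : ℕ} (lam : Ptn n) (x : ℕ × ℕ) : Prop :=
  cell lam x ∧ e ∣ hookLen lam x ∧ hookLen lam x * (e - i) = e * legLen lam x

def HasHook (e i : ℕ) {n : ℕ} (lam : Ptn n) : Prop := ∃ x : ℕ × ℕ, IsHook e i lam x

end Ptn

/-- `x` and `y` lie in the same `(e,i)`-ladder. -/
def SameLadder (e i : ℕ) (x y : ℕ × ℕ) : Prop :=
  (e - i) * x.2 + x.1 * i = (e - i) * y.2 + y.1 * i ∧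
  ((x.2 : ℤ) - (x.1 : ℤ)) ≡ ((y.2 : ℤ) - (y.1 : ℤ)) [ZMOD (e : ℤ)]

/-- `lam` and `mu` are in the same `(e,i)`-regularisation class. -/
def SameClass (e i : ℕ) {n : ℕ} (lam mu : Ptn n) : Prop :=
  ∀ x : ℕ × ℕ,
    Set.ncard {y : ℕ × ℕ | lam.cell y ∧ SameLadder e i x y}
      = Set.ncard {y : ℕ × ℕ | mu.cell y ∧ SameLadder e i x y}

/-- dominance order: `mu` dominates `lam`. -/
def Dominates {n : ℕ} (mu lam : Ptn n) : Prop :=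
  ∀ j : ℕ, ∑ k ∈ Finset.Icc 1 j, lam.part k ≤ ∑ k ∈ Finset.Icc 1 j, mu.part k

/-- `mu` is obtained from `lam` by moving some nodes strictly upwards in their
`(e,i)`-ladders. -/
def MovedUp (e i : ℕ) {n : ℕ} (lam mu : Ptn n) : Prop :=
  mu ≠ lam ∧ SameClass e i lam mu ∧
  ∃ f : ℕ × ℕ → ℕ × ℕ,
    Set.BijOn f {x : ℕ × ℕ | mu.cell x ∧ ¬ lam.cell x}
      {y : ℕ × ℕ | lam.cell y ∧ ¬ mu.cell y} ∧
    ∀ x : ℕ × ℕ, mu.cell x → ¬ lam.cell x →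
      SameLadder e i x (f x) ∧ x.1 < (f x).1

/-- position `t` is occupied in the `s`-bead abacus display of `lam`. -/
def Occupied {n : ℕ} (lam : Ptn n) (s t : ℕ) : Prop :=
  ∃ k : ℕ, 1 ≤ k ∧ k ≤ s ∧ t = lam.part k + s - k

namespace StmtAux

lemma beta_lt {n : ℕ} (lam : Ptn n) {s j k : ℕ} (hj : 1 ≤ j) (hjk : j < k) (hks : k ≤ s) :
    lam.part k + s - k < lam.part j + s - j := by
  have := lam.antitone hj (le_of_lt hjk)
  omega

lemma legLen_eq {n : ℕ} (lam : Ptn n) {a c m : ℕ}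
    (hiff : ∀ j, 1 ≤ j → (c ≤ lam.part j ↔ j ≤ m)) :
    lam.legLen (a, c) = m - a := by
  have hset : {j : ℕ | (a, c).1 < j ∧ (a, c).2 ≤ lam.part j} = ↑(Finset.Ioc a m) := by
    ext j
    simp only [Set.mem_setOf_eq, Finset.coe_Ioc, Set.mem_Ioc]
    constructor
    · rintro ⟨h1, h2⟩; exact ⟨h1, (hiff j (by omega)).mp h2⟩
    · rintro ⟨h1, h2⟩; exact ⟨h1, (hiff j (by omega)).mpr h2⟩
  rw [Ptn.legLen, hset, Set.ncard_coe_finset, Nat.card_Ioc]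

lemma count_eq {n : ℕ} (lam : Ptn n) {s a m d : ℕ}
    (ha1 : 1 ≤ a) (ham : a ≤ m) (hms : m ≤ s)
    (hprop : ∀ j, 1 ≤ j → j ≤ s → (d < lam.part j + s - j ↔ j ≤ m)) :
    Set.ncard {t : ℕ | d < t ∧ t < lam.part a + s - a ∧ Occupied lam s t} = m - a := by
  have hinj : Set.InjOn (fun j => lam.part j + s - j) (Set.Ioc a m) := by
    intro x hx y hy hxy
    simp only [Set.mem_Ioc] at hx hy
    dsimp only at hxy
    by_contra hne
    rcases lt_or_gt_of_ne hne with h | h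
    · have := beta_lt lam (show 1 ≤ x by omega) h (show y ≤ s by omega)
      omega
    · have := beta_lt lam (show 1 ≤ y by omega) h (show x ≤ s by omega)
      omega
  have hset : {t : ℕ | d < t ∧ t < lam.part a + s - a ∧ Occupied lam s t}
      = (fun j => lam.part j + s - j) '' Set.Ioc a m := by
    ext t
    simp only [Set.mem_setOf_eq, Set.mem_image, Set.mem_Ioc]
    constructor
    · rintro ⟨hdt, htb, j, hj1, hjs, rfl⟩
      refine ⟨j, ⟨?_, (hprop j hj1 hjs).mp hdt⟩, rfl⟩
      by_contra h
      have hja : j ≤ a := by omega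
      rcases eq_or_lt_of_le hja with h' | h'
      · subst h'; omega
      · have := beta_lt lam (show 1 ≤ j by omega) h' (show a ≤ s by omega)
        omega
    · rintro ⟨j, ⟨haj, hjm⟩, rfl⟩
      have h1 := (hprop j (by omega) (by omega)).mpr hjm
      have h2 := beta_lt lam ha1 haj (show j ≤ s by omega)
      exact ⟨h1, h2, j, by omega, by omega, rfl⟩
  rw [hset, Set.ncard_image_of_injOn hinj]
  rw [show Set.Ioc a m = ↑(Finset.Ioc a m) from (Finset.coe_Ioc a m).symm,
    Set.ncard_coe_finset, Nat.card_Ioc]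

end StmtAux

open StmtAux in
theorem stmt4 (e i n s : ℕ) (he : 2 ≤ e) (hi : 0 < i) (hie : i < e)
    (lam : Ptn n) (hs : ∀ k : ℕ, s < k → lam.part k = 0) :
    Ptn.HasHook e i lam ↔
      ∃ b k : ℕ, 0 < k ∧ Occupied lam s b ∧ k * e ≤ b ∧
        ¬ Occupied lam s (b - k * e) ∧
        Set.ncard {t : ℕ | b - k * e < t ∧ t < b ∧ Occupied lam s t}
          = k * (e - i) := by
  constructor
  · -- forward
    rintro ⟨⟨a, c⟩, hcell, hdvd, heq⟩
    obtain ⟨ha1, hc1, hcla⟩ := hcell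
    dsimp only at ha1 hc1 hcla
    obtain ⟨k, hk⟩ := hdvd
    have has : a ≤ s := by
      by_contra h; have := hs a (by omega); omega
    set m := Nat.findGreatest (fun j => c ≤ lam.part j) s with hmdef
    have hms : m ≤ s := Nat.findGreatest_le s
    have hiff : ∀ j, 1 ≤ j → (c ≤ lam.part j ↔ j ≤ m) := by
      intro j hj
      constructor
      · intro hcj
        have hjs : j ≤ s := by
          by_contra h; have := hs j (by omega); omega
        exact Nat.le_findGreatest (P := fun j => c ≤ lam.part j) hjs hcj
      · intro hjm
        have hPm : c ≤ lam.part m := Nat.findGreatest_spec (P := fun j => c ≤ lam.part j) has hcla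
        exact le_trans hPm (lam.antitone hj hjm)
    have ham : a ≤ m := (hiff a ha1).mp hcla
    have hL : lam.legLen (a, c) = m - a := legLen_eq lam hiff
    have hHexp : lam.hookLen (a, c) = lam.part a - c + (m - a) + 1 := by
      show lam.part a - c + lam.legLen (a, c) + 1 = _
      rw [hL]
    have hk1 : 0 < k := by
      rcases Nat.eq_zero_or_pos k with h | h
      · rw [h, Nat.mul_zero] at hk; omega
      · exact h
    have hma : m - a = k * (e - i) := by
      have he0 : 0 < e := by omega
      apply Nat.eq_of_mul_eq_mul_left he0
      rw [← hL, ← heq, hk]; ring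
    have hcomm : k * e = e * k := Nat.mul_comm k e
    set d := s - m + c - 1 with hddef
    have hbd : d + e * k = lam.part a + s - a := by
      rw [← hk, hHexp]; omega
    have hprop : ∀ j, 1 ≤ j → j ≤ s → (d < lam.part j + s - j ↔ j ≤ m) := by
      intro j hj hjs
      constructor
      · intro hdj
        by_contra h
        have : ¬ c ≤ lam.part j := fun hc => h ((hiff j hj).mp hc)
        omega
      · intro hjm
        have := (hiff j hj).mpr hjm
        omega
    have hdb : lam.part a + s - a - k * e = d := by omega
    refine ⟨lam.part a + s - a, k, hk1, ⟨a, ha1, has, rfl⟩, by omega, ?_, ?_⟩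
    · rw [hdb]
      rintro ⟨j, hj1, hjs, hdj⟩
      rcases le_or_gt j m with h | h
      · have := (hiff j hj1).mpr h; omega
      · have : ¬ c ≤ lam.part j := fun hc => by
          have := (hiff j hj1).mp hc; omega
        omega
    · simp only [hdb]
      rw [count_eq lam ha1 ham hms hprop, hma]
  · -- backward
    rintro ⟨b, k, hk1, ⟨a, ha1, has, hba⟩, hkeb, hnocc, hcount⟩
    have hcomm : k * e = e * k := Nat.mul_comm k e
    have hke0 : 0 < k * e := Nat.mul_pos hk1 (by omega)
    set d := b - k * e with hddef
    set m := Nat.findGreatest (fun j => d < lam.part j + s - j) s with hmdef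
    have hms : m ≤ s := Nat.findGreatest_le s
    have haP : d < lam.part a + s - a := by omega
    have ham : a ≤ m := Nat.le_findGreatest (P := fun j => d < lam.part j + s - j) has haP
    have hPm : d < lam.part m + s - m := Nat.findGreatest_spec (P := fun j => d < lam.part j + s - j) has haP
    have hprop : ∀ j, 1 ≤ j → j ≤ s → (d < lam.part j + s - j ↔ j ≤ m) := by
      intro j hj hjs
      constructor
      · intro h; exact Nat.le_findGreatest (P := fun j => d < lam.part j + s - j) hjs h
      · intro hjm
        have := lam.antitone hj hjm
        omega
    have hsmall : ∀ j, m < j → j ≤ s → lam.part j + s - j < d := by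
      intro j hmj hjs
      have h1 : ¬ d < lam.part j + s - j := fun h => by
        have := Nat.le_findGreatest (P := fun j => d < lam.part j + s - j) hjs h; omega
      have h2 : lam.part j + s - j ≠ d := by
        intro h; exact hnocc ⟨j, by omega, hjs, h.symm⟩
      omega
    have hcard : (Finset.Ioc m s).card ≤ (Finset.range d).card := by
      apply Finset.card_le_card_of_injOn (fun j => lam.part j + s - j)
      · intro j hj
        simp only [Finset.mem_coe, Finset.mem_Ioc] at hj
        simp only [Finset.mem_coe, Finset.mem_range]
        exact hsmall j hj.1 hj.2
      · intro x hx y hy hxy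
        simp only [Finset.coe_Ioc, Set.mem_Ioc] at hx hy
        dsimp only at hxy
        by_contra hne
        rcases lt_or_gt_of_ne hne with h | h
        · have := beta_lt lam (show 1 ≤ x by omega) h (show y ≤ s by omega); omega
        · have := beta_lt lam (show 1 ≤ y by omega) h (show x ≤ s by omega); omega
    rw [Nat.card_Ioc, Finset.card_range] at hcard
    set c := d + 1 + m - s with hcdef
    have hc1 : 1 ≤ c := by omega
    have hiff : ∀ j, 1 ≤ j → (c ≤ lam.part j ↔ j ≤ m) := by
      intro j hj
      constructor
      · intro hcj
        by_contra h
        push_neg at h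
        rcases le_or_gt j s with hjs | hjs
        · have hm1 : m < s := by omega
          have h1 := hsmall (m + 1) (by omega) (by omega)
          have h2 := lam.antitone (show 1 ≤ m + 1 by omega) (show m + 1 ≤ j by omega)
          omega
        · have := hs j (by omega); omega
      · intro hjm
        have h2 := lam.antitone hj hjm
        omega
    have hcla : c ≤ lam.part a := (hiff a ha1).mpr ham
    have hL : lam.legLen (a, c) = m - a := legLen_eq lam hiff
    rw [hba] at hcount
    rw [count_eq lam ha1 ham hms hprop] at hcount
    have hH : lam.hookLen (a, c) = k * e := by
      show lam.part a - c + lam.legLen (a, c) + 1 = k * e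
      rw [hL]
      omega
    refine ⟨(a, c), ⟨ha1, hc1, hcla⟩, ⟨k, hH.trans hcomm⟩, ?_⟩
    rw [hH, hL, hcount]
    ring
end

section
/- Let λ be (e,i)-regular, i.e., λ has no (e,i)-hooks. Then there are no three rungs A, B, C in the same (e,i)-ladder with A strictly above B and B strictly above C (in row order) such that B ∈ [λ] while A ∉ [λ] and C ∉ [λ]. Equivalently, the intersection of [λ] with any (e,i)-ladder is an upward-closed then contiguous segment with at most one 'descent': the set of rungs of the ladder lying in [λ] forms a suffix-free pattern with no occupied rung strictly between two unoccupied rungs. -/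
open scoped BigOperators

namespace StmtAux

variable {n : ℕ}

/-- number of rows `a ≥ 1` whose beta-number `λ(a) - a` is at least `v`. -/
noncomputable def bN (lam : Ptn n) (v : ℤ) : ℕ :=
  ((Finset.Icc 1 (n + v.natAbs)).filter (fun a => v ≤ (lam.part a : ℤ) - a)).card

lemma beta_anti (lam : Ptn n) {a b : ℕ} (ha : 1 ≤ a) (hab : a ≤ b) :
    (lam.part b : ℤ) - b ≤ (lam.part a : ℤ) - a := by
  have h := lam.antitone ha hab
  have h' : (lam.part b : ℤ) ≤ lam.part a := by exact_mod_cast h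
  omega

lemma le_bN_iff (lam : Ptn n) (v : ℤ) (a : ℕ) (ha : 1 ≤ a) :
    a ≤ bN lam v ↔ v ≤ (lam.part a : ℤ) - a := by
  constructor
  · intro h
    by_contra hv
    push_neg at hv
    have hsub : ((Finset.Icc 1 (n + v.natAbs)).filter
        (fun a' => v ≤ (lam.part a' : ℤ) - a')) ⊆ Finset.Icc 1 (a - 1) := by
      intro a' ha'
      simp only [Finset.mem_filter, Finset.mem_Icc] at ha' ⊢
      obtain ⟨⟨h1, _⟩, h2⟩ := ha'
      refine ⟨h1, ?_⟩
      by_contra hc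
      push_neg at hc
      have hle : a ≤ a' := by omega
      have := beta_anti lam ha hle
      omega
    have hcard := Finset.card_le_card hsub
    rw [Nat.card_Icc] at hcard
    unfold bN at h
    omega
  · intro h
    have hsub : Finset.Icc 1 a ⊆ (Finset.Icc 1 (n + v.natAbs)).filter
        (fun a' => v ≤ (lam.part a' : ℤ) - a') := by
      intro a' ha'
      simp only [Finset.mem_Icc] at ha'
      have hb : v ≤ (lam.part a' : ℤ) - a' := le_trans h (beta_anti lam ha'.1 ha'.2)
      simp only [Finset.mem_filter, Finset.mem_Icc]
      refine ⟨⟨ha'.1, ?_⟩, hb⟩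
      by_cases hn : a' ≤ n
      · omega
      · have h0 : lam.part a' = 0 := lam.bounded a' (by omega)
        rw [h0] at hb
        omega
    have hcard := Finset.card_le_card hsub
    rw [Nat.card_Icc] at hcard
    unfold bN
    omega

lemma bN_mono (lam : Ptn n) {v w : ℤ} (h : v ≤ w) : bN lam w ≤ bN lam v := by
  rcases Nat.eq_zero_or_pos (bN lam w) with h0 | h0
  · omega
  · have h1 := (le_bN_iff lam w (bN lam w) h0).mp le_rfl
    exact (le_bN_iff lam v (bN lam w) h0).mpr (le_trans h h1)

lemma bN_step (lam : Ptn n) (v : ℤ) : bN lam v ≤ bN lam (v + 1) + 1 := by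
  by_contra hc
  push_neg at hc
  set s := bN lam (v + 1) with hs
  have h1 : v ≤ (lam.part (s + 1) : ℤ) - (s + 1) :=
    (le_bN_iff lam v (s + 1) (by omega)).mp (by omega)
  have h2 : v ≤ (lam.part (s + 2) : ℤ) - (s + 2) :=
    (le_bN_iff lam v (s + 2) (by omega)).mp (by omega)
  have h4 : ¬ (v + 1 ≤ (lam.part (s + 1) : ℤ) - (s + 1)) := by
    intro h
    have := (le_bN_iff lam (v + 1) (s + 1) (by omega)).mpr h
    omega
  have h5 : (lam.part (s + 2) : ℤ) ≤ lam.part (s + 1) := by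
    exact_mod_cast lam.antitone (show 1 ≤ s + 1 by omega) (show s + 1 ≤ s + 2 by omega)
  omega

/-- there is no row whose beta number equals `g`, given `bN g = bN (g+1)`. -/
lemma no_beta_eq (lam : Ptn n) {g : ℤ} (hgap : bN lam g = bN lam (g + 1))
    {a : ℕ} (ha : 1 ≤ a) : (lam.part a : ℤ) - a ≠ g := by
  intro h
  have h1 : a ≤ bN lam g := (le_bN_iff lam g a ha).mpr (by omega)
  have h2 := (le_bN_iff lam (g + 1) a ha).mp (by omega)
  omega

lemma window_big (lam : Ptn n) (e ρ : ℤ) (he : 0 ≤ e) :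
    ∀ k : ℕ, ∀ v : ℤ, (k * ρ + 1 : ℤ) ≤ (bN lam v : ℤ) - bN lam (v + k * e) →
      ∃ u : ℤ, v ≤ u ∧ (ρ + 1 : ℤ) ≤ (bN lam u : ℤ) - bN lam (u + e) := by
  intro k
  induction k with
  | zero =>
    intro v h
    norm_num at h
  | succ k ih =>
    intro v h
    by_cases hv : (ρ + 1 : ℤ) ≤ (bN lam v : ℤ) - bN lam (v + e)
    · exact ⟨v, le_rfl, hv⟩
    · push_neg at hv
      have hveq : (v + e) + (k : ℤ) * e = v + ((k : ℕ) + 1 : ℕ) * e := by push_cast; ring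
      have h2 : (k * ρ + 1 : ℤ) ≤ (bN lam (v + e) : ℤ) - bN lam ((v + e) + k * e) := by
        rw [hveq]
        push_cast at h ⊢
        linarith
      obtain ⟨u, hu1, hu2⟩ := ih (v + e) h2
      exact ⟨u, by linarith, hu2⟩

lemma window_small (lam : Ptn n) (e ρ : ℤ) (he : 0 ≤ e) :
    ∀ m : ℕ, ∀ v : ℤ, ((bN lam (v - m * e) : ℤ) - bN lam v ≤ m * ρ - 1) →
      ∃ u : ℤ, u ≤ v - e ∧ (bN lam u : ℤ) - bN lam (u + e) ≤ ρ - 1 := by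
  intro m
  induction m with
  | zero =>
    intro v h
    norm_num at h
  | succ m ih =>
    intro v h
    by_cases hv : (bN lam (v - e) : ℤ) - bN lam v ≤ ρ - 1
    · exact ⟨v - e, le_rfl, by rw [sub_add_cancel]; exact hv⟩
    · push_neg at hv
      have hveq : (v - e) - (m : ℤ) * e = v - ((m : ℕ) + 1 : ℕ) * e := by push_cast; ring
      have h2 : (bN lam ((v - e) - m * e) : ℤ) - bN lam (v - e) ≤ m * ρ - 1 := by
        rw [hveq]
        push_cast at h ⊢
        linarith
      obtain ⟨u, hu1, hu2⟩ := ih (v - e) h2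
      exact ⟨u, by linarith, hu2⟩

lemma crossing (lam : Ptn n) (e ρ : ℤ) :
    ∀ t : ℕ, ∀ u : ℤ, (bN lam u : ℤ) - bN lam (u + e) ≤ ρ - 1 →
      ρ + 1 ≤ (bN lam (u + t) : ℤ) - bN lam (u + t + e) →
      ∃ g : ℤ, (bN lam g : ℤ) - bN lam (g + e) ≤ ρ ∧
        ρ + 1 ≤ (bN lam (g + 1) : ℤ) - bN lam (g + 1 + e) := by
  intro t
  induction t with
  | zero =>
    intro u h1 h2
    norm_num at h2
    linarith
  | succ t ih =>
    intro u h1 h2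
    by_cases hv : (bN lam (u + t) : ℤ) - bN lam (u + t + e) ≤ ρ
    · refine ⟨u + t, hv, ?_⟩
      have hveq : u + ((t : ℕ) + 1 : ℕ) = u + t + 1 := by push_cast; ring
      rw [hveq] at h2
      exact h2
    · push_neg at hv
      exact ih u h1 (by linarith)

/-- if `x` is strictly above `y` in the same ladder, `x` is obtained from `y`
by moving up `k ≥ 1` rungs. -/
lemma ladder_step {e i : ℕ} (hi : 0 < i) (hie : i < e) {x y : ℕ × ℕ}
    (h : SameLadder e i x y) (hlt : x.1 < y.1) :
    ∃ k : ℕ, 1 ≤ k ∧ (y.1 : ℤ) = x.1 + k * ((e : ℤ) - i) ∧ (x.2 : ℤ) = y.2 + k * i := by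
  obtain ⟨h1, h2⟩ := h
  have h1' : ((e : ℤ) - i) * x.2 + x.1 * i = ((e : ℤ) - i) * y.2 + y.1 * i := by
    zify [hie.le] at h1
    exact_mod_cast h1
  obtain ⟨M, hM⟩ := h2.dvd
  set K : ℤ := -M with hK
  have hsum : ((x.2 : ℤ) - y.2) + ((y.1 : ℤ) - x.1) = e * K := by
    rw [hK]; linarith
  have hρ : ((e : ℤ) - i) * ((x.2 : ℤ) - y.2) = i * ((y.1 : ℤ) - x.1) := by linarith
  have hec : (e : ℤ) * ((x.2 : ℤ) - y.2) = (e : ℤ) * (i * K) := by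
    have heq1 : (e : ℤ) * ((x.2 : ℤ) - y.2)
        = ((e : ℤ) - i) * ((x.2 : ℤ) - y.2) + i * ((x.2 : ℤ) - y.2) := by ring
    rw [heq1, hρ]
    have heq2 : (i : ℤ) * ((y.1 : ℤ) - x.1) + i * ((x.2 : ℤ) - y.2)
        = i * (((x.2 : ℤ) - y.2) + ((y.1 : ℤ) - x.1)) := by ring
    rw [heq2, hsum]; ring
  have he0 : (e : ℤ) ≠ 0 := by exact_mod_cast (by omega : e ≠ 0)
  have hc : (x.2 : ℤ) - y.2 = i * K := mul_left_cancel₀ he0 hec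
  have hr : (y.1 : ℤ) - x.1 = ((e : ℤ) - i) * K := by
    have heq3 : (y.1 : ℤ) - x.1 = e * K - ((x.2 : ℤ) - y.2) := by linarith
    rw [heq3, hc]; ring
  have hKpos : 0 < K := by
    by_contra hneg
    push_neg at hneg
    have hρpos : (0 : ℤ) < (e : ℤ) - i := by
      have : (i : ℤ) < e := by exact_mod_cast hie
      linarith
    have hnp : ((e : ℤ) - i) * K ≤ 0 := mul_nonpos_iff.mpr (Or.inl ⟨le_of_lt hρpos, hneg⟩)
    have hlt' : (x.1 : ℤ) < y.1 := by exact_mod_cast hlt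
    linarith
  lift K to ℕ using (le_of_lt hKpos) with k hk
  refine ⟨k, ?_, by linarith, by linarith⟩
  exact_mod_cast hKpos

end StmtAux

theorem stmt13 (e i n : ℕ) (he : 2 ≤ e) (hi : 0 < i) (hie : i < e)
    (lam : Ptn n) (hreg : ¬ Ptn.HasHook e i lam) :
    ¬ ∃ A B C : ℕ × ℕ, 0 < A.1 ∧ 0 < A.2 ∧ 0 < C.1 ∧ 0 < C.2 ∧
        SameLadder e i A B ∧ SameLadder e i B C ∧
        A.1 < B.1 ∧ B.1 < C.1 ∧
        lam.cell B ∧ ¬ lam.cell A ∧ ¬ lam.cell C := by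
  rintro ⟨A, B, C, hA1, hA2, _hC1, _hC2, hAB, hBC, hABr, hBCr, hcB, hcA, hcC⟩
  obtain ⟨hB1, hB2, hB3⟩ := hcB
  obtain ⟨k, hk1, hk2, hk3⟩ := StmtAux.ladder_step hi hie hAB hABr
  obtain ⟨m, hm1, hm2, hm3⟩ := StmtAux.ladder_step hi hie hBC hBCr
  set v0 : ℤ := (B.2 : ℤ) - B.1 with hv0
  -- B is occupied
  have hF1 : B.1 ≤ StmtAux.bN lam v0 := by
    refine (StmtAux.le_bN_iff lam v0 B.1 hB1).mpr ?_
    have : (B.2 : ℤ) ≤ lam.part B.1 := by exact_mod_cast hB3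
    omega
  -- A is not occupied
  have hA3 : ¬ (A.2 ≤ lam.part A.1) := fun h => hcA ⟨hA1, hA2, h⟩
  have hbA : StmtAux.bN lam ((A.2 : ℤ) - A.1) < A.1 := by
    by_contra hcon
    push_neg at hcon
    have hx := (StmtAux.le_bN_iff lam ((A.2 : ℤ) - A.1) A.1 hA1).mp hcon
    exact hA3 (by omega)
  have hAv : (A.2 : ℤ) - A.1 = v0 + (k : ℤ) * e := by
    rw [hv0]; linear_combination hk3 + hk2
  rw [hAv] at hbA
  -- C is not occupied
  have hC1' : 1 ≤ C.1 := _hC1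
  have hC3 : ¬ (C.2 ≤ lam.part C.1) := fun h => hcC ⟨_hC1, _hC2, h⟩
  have hbC : StmtAux.bN lam ((C.2 : ℤ) - C.1) < C.1 := by
    by_contra hcon
    push_neg at hcon
    have hx := (StmtAux.le_bN_iff lam ((C.2 : ℤ) - C.1) C.1 hC1').mp hcon
    exact hC3 (by omega)
  have hCv : (C.2 : ℤ) - C.1 = v0 - (m : ℤ) * e := by
    rw [hv0]; linear_combination - hm3 - hm2
  rw [hCv] at hbC
  -- find a bead-rich window on the right
  have he0 : (0 : ℤ) ≤ (e : ℤ) := by positivity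
  have hwbH : ((k : ℤ) * ((e : ℤ) - i) + 1) ≤
      (StmtAux.bN lam v0 : ℤ) - StmtAux.bN lam (v0 + (k : ℤ) * e) := by
    have h1 : (B.1 : ℤ) ≤ StmtAux.bN lam v0 := by exact_mod_cast hF1
    have h2 : (StmtAux.bN lam (v0 + (k : ℤ) * e) : ℤ) + 1 ≤ (A.1 : ℤ) := by
      exact_mod_cast hbA
    linarith [hk2]
  obtain ⟨up, hup1, hup2⟩ := StmtAux.window_big lam (e : ℤ) ((e : ℤ) - i) he0 k v0 hwbH
  -- find a bead-poor window on the left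
  have hwsH : (StmtAux.bN lam (v0 - (m : ℤ) * e) : ℤ) - StmtAux.bN lam v0 ≤
      (m : ℤ) * ((e : ℤ) - i) - 1 := by
    have h1 : (B.1 : ℤ) ≤ StmtAux.bN lam v0 := by exact_mod_cast hF1
    have h2 : (StmtAux.bN lam (v0 - (m : ℤ) * e) : ℤ) + 1 ≤ (C.1 : ℤ) := by
      exact_mod_cast hbC
    linarith [hm2]
  obtain ⟨um, hum1, hum2⟩ := StmtAux.window_small lam (e : ℤ) ((e : ℤ) - i) he0 m v0 hwsH
  -- crossing
  have humup : um ≤ up := by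
    have : (1 : ℤ) ≤ e := by exact_mod_cast (by omega : 1 ≤ e)
    linarith
  set t : ℕ := (up - um).toNat with htdef
  have ht : um + (t : ℤ) = up := by
    have := Int.toNat_of_nonneg (by linarith : (0 : ℤ) ≤ up - um)
    rw [htdef]
    omega
  have hcr2 : ((e : ℤ) - i) + 1 ≤
      (StmtAux.bN lam (um + (t : ℤ)) : ℤ) - StmtAux.bN lam (um + (t : ℤ) + e) := by
    rw [ht]; exact hup2
  obtain ⟨g, hg1, hg2⟩ := StmtAux.crossing lam (e : ℤ) ((e : ℤ) - i) t um hum2 hcr2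
  have e1 : g + 1 + (e : ℤ) = g + (e : ℤ) + 1 := by ring
  rw [e1] at hg2
  -- step analysis: gap at g, bead at g+e, exactly e-i beads in between
  have s1 := StmtAux.bN_step lam g
  have s1' := StmtAux.bN_mono lam (show g ≤ g + 1 by omega)
  have s2 := StmtAux.bN_step lam (g + (e : ℤ))
  have s2' := StmtAux.bN_mono lam (show g + (e : ℤ) ≤ g + (e : ℤ) + 1 by omega)
  have hgap : StmtAux.bN lam g = StmtAux.bN lam (g + 1) := by omega
  have hbead : StmtAux.bN lam (g + (e : ℤ)) = StmtAux.bN lam (g + (e : ℤ) + 1) + 1 := by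
    omega
  have hw : (StmtAux.bN lam g : ℤ) = StmtAux.bN lam (g + (e : ℤ)) + ((e : ℤ) - i) := by
    omega
  -- the hook node
  set ρn : ℕ := e - i with hρn
  set a : ℕ := StmtAux.bN lam (g + (e : ℤ)) with hadef
  have ha1 : 1 ≤ a := by omega
  have hβa : (lam.part a : ℤ) - a = g + e := by
    have hub : g + e ≤ (lam.part a : ℤ) - a :=
      (StmtAux.le_bN_iff lam (g + (e : ℤ)) a ha1).mp le_rfl
    have hlb : ¬ (g + e + 1 ≤ (lam.part a : ℤ) - a) := by
      intro h
      have := (StmtAux.le_bN_iff lam (g + (e : ℤ) + 1) a ha1).mpr (by omega)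
      omega
    omega
  have hN1 : StmtAux.bN lam (g + 1) = a + ρn := by omega
  have hup2' : g + 1 ≤ (lam.part (a + ρn) : ℤ) - (a + ρn) :=
    (StmtAux.le_bN_iff lam (g + 1) (a + ρn) (by omega)).mp (by omega)
  have hdn1 : ¬ (g + 1 ≤ (lam.part (a + ρn + 1) : ℤ) - (a + ρn + 1)) := by
    intro h
    have := (StmtAux.le_bN_iff lam (g + 1) (a + ρn + 1) (by omega)).mpr h
    omega
  have hdn2 : (lam.part (a + ρn + 1) : ℤ) - (a + ρn + 1) ≠ g :=
    StmtAux.no_beta_eq lam hgap (by omega)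
  have hdn : (lam.part (a + ρn + 1) : ℤ) - (a + ρn + 1) ≤ g - 1 := by omega
  -- positivity of the column
  have hgpos : 0 ≤ g + a + ρn := by
    by_cases hg0 : 0 ≤ g
    · omega
    · push_neg at hg0
      set q : ℕ := (-g).toNat with hqdef
      have hq : (q : ℤ) = -g := by omega
      have hq1 : 1 ≤ q := by omega
      have hβq : g ≤ (lam.part q : ℤ) - q := by
        have : (0 : ℤ) ≤ lam.part q := by positivity
        omega
      have hβq' : (lam.part q : ℤ) - q ≠ g := StmtAux.no_beta_eq lam hgap hq1
      have hq2 : q ≤ StmtAux.bN lam (g + 1) :=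
        (StmtAux.le_bN_iff lam (g + 1) q hq1).mpr (by omega)
      omega
  have hparti : i ≤ lam.part a := by omega
  set c' : ℕ := lam.part a + 1 - i with hc'def
  have hc'ℤ : (c' : ℤ) = (lam.part a : ℤ) + 1 - i := by omega
  have hc1 : 1 ≤ c' := by omega
  have hcell : lam.cell (a, c') := ⟨ha1, hc1, by show c' ≤ lam.part a; omega⟩
  -- leg length
  have hset : {b : ℕ | (a, c').1 < b ∧ (a, c').2 ≤ lam.part b} = Set.Icc (a + 1) (a + ρn) := by
    ext b
    simp only [Set.mem_setOf_eq, Set.mem_Icc]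
    constructor
    · rintro ⟨hb1, hb2⟩
      refine ⟨hb1, ?_⟩
      by_contra hb3
      push_neg at hb3
      have hmono := lam.antitone (show 1 ≤ a + ρn + 1 by omega) (show a + ρn + 1 ≤ b by omega)
      have hcast : (lam.part b : ℤ) ≤ lam.part (a + ρn + 1) := by exact_mod_cast hmono
      have hcast2 : (c' : ℤ) ≤ lam.part b := by exact_mod_cast hb2
      omega
    · rintro ⟨hb1, hb2⟩
      refine ⟨hb1, ?_⟩
      have hmono := lam.antitone (show 1 ≤ b by omega) hb2
      have hcast : (lam.part (a + ρn) : ℤ) ≤ lam.part b := by exact_mod_cast hmono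
      have : (c' : ℤ) ≤ lam.part b := by omega
      exact_mod_cast this
  have hleg : lam.legLen (a, c') = ρn := by
    rw [Ptn.legLen, hset, ← Finset.coe_Icc, Set.ncard_coe_finset, Nat.card_Icc]
    omega
  have hhook : lam.hookLen (a, c') = e := by
    rw [Ptn.hookLen, hleg]
    have harm : lam.part (a, c').1 - (a, c').2 = i - 1 := by
      show lam.part a - c' = i - 1
      omega
    rw [harm]
    omega
  exact hreg ⟨(a, c'), hcell, by rw [hhook], by rw [hhook, hleg, hρn]⟩
end
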